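/- Let I_a : ℝ → ℝ be a cubic polynomial with positive leading coefficient a > 0, say I_a(v) = av³ + bv² + cv + d. Then there exist β₁ > 0 and a constant C > 0 such that for all v, v' ∈ ℝ: (I_a(v) + β₁v - I_a(v') - β₁v')·(v - v') ≥ (1/C)·(1 + |v| + |v'|)²·|v - v'|². -/

import Mathlib

theorem stmt_4 (a b c d : ℝ) (ha : 0 < a) :
    ∃ β₁ : ℝ, 0 < β₁ ∧ ∃ C : ℝ, 0 < C ∧
      ∀ v v' : ℝ,
        ((a * v ^ 3 + b * v ^ 2 + c * v + d + β₁ * v)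
          - (a * v' ^ 3 + b * v' ^ 2 + c * v' + d + β₁ * v')) * (v - v')
        ≥ (1 / C) * (1 + |v| + |v'|) ^ 2 * |v - v'| ^ 2 := by
  refine ⟨4 * b ^ 2 / a + |c| + a / 4 + 1, by positivity, 12 / a, by positivity, ?_⟩
  intro v v'
  have hdiv : a * (4 * b ^ 2 / a) = 4 * b ^ 2 := by field_simp
  have h1 : -(|b| * |v|) ≤ b * v := by rw [← abs_mul]; exact neg_abs_le _
  have h2 : -(|b| * |v'|) ≤ b * v' := by rw [← abs_mul]; exact neg_abs_le _
  have h3 : -|c| ≤ c := neg_abs_le c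
  have key : a * (a * (1 + |v| + |v'|) ^ 2) ≤
      a * (12 * (a * (v ^ 2 + v * v' + v' ^ 2) + b * (v + v') + c
        + (4 * b ^ 2 / a + |c| + a / 4 + 1))) := by
    have hxx : a * a * |v| ^ 2 = a * a * v ^ 2 := by rw [sq_abs]
    have hyy : a * a * |v'| ^ 2 = a * a * v' ^ 2 := by rw [sq_abs]
    nlinarith [sq_abs v, sq_abs v', sq_abs b, ha, hdiv, hxx, hyy,
      sq_nonneg (a * |v| - 4 * |b|), sq_nonneg (a * |v'| - 4 * |b|),
      mul_nonneg (mul_pos ha ha).le (sq_nonneg (v + v')),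
      mul_nonneg (mul_pos ha ha).le (sq_nonneg (1 - |v|)),
      mul_nonneg (mul_pos ha ha).le (sq_nonneg (1 - |v'|)),
      mul_nonneg (mul_pos ha ha).le (sq_nonneg (|v| - |v'|)),
      mul_le_mul_of_nonneg_left h1 ha.le,
      mul_le_mul_of_nonneg_left h2 ha.le,
      mul_le_mul_of_nonneg_left h3 ha.le]
  have key2 : a * (1 + |v| + |v'|) ^ 2 ≤
      12 * (a * (v ^ 2 + v * v' + v' ^ 2) + b * (v + v') + c
        + (4 * b ^ 2 / a + |c| + a / 4 + 1)) := (mul_le_mul_iff_right₀ ha).mp key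
  have hQ : (1 / (12 / a)) * (1 + |v| + |v'|) ^ 2 ≤
      a * (v ^ 2 + v * v' + v' ^ 2) + b * (v + v') + c
        + (4 * b ^ 2 / a + |c| + a / 4 + 1) := by
    have e : (1:ℝ) / (12 / a) = a / 12 := by
      rw [one_div_div]
    rw [e]
    linarith
  have hsq : |v - v'| ^ 2 = (v - v') ^ 2 := sq_abs _
  rw [hsq]
  have key3 := mul_le_mul_of_nonneg_right hQ (sq_nonneg (v - v'))
  calc (1 / (12 / a)) * (1 + |v| + |v'|) ^ 2 * (v - v') ^ 2
      ≤ (a * (v ^ 2 + v * v' + v' ^ 2) + b * (v + v') + c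
          + (4 * b ^ 2 / a + |c| + a / 4 + 1)) * (v - v') ^ 2 := key3
    _ = _ := by ring
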